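/- For the fixed connected component of the network: the constants a_L, b_L and c_L can be identified from ṡ_L and s̈_L (i.e., the map k ↦ (a_L, b_L, c_L) is identifiable from the variable s_L with D = 2); moreover, if L > 1, the constants a_j and K_j = b_j + c_j for 1 ≤ j ≤ L−1 can be identified from ṡ_L, s̈_L and s_L^{(3)} (i.e., the map k ↦ (a_j, b_j+c_j)_{1≤j≤L−1} is identifiable from s_L with D = 3). -/

import Mathlib

open MvPolynomial Finsupp

variable {σ : Type*}

/-- The total (Lie) derivative of a polynomial `φ` associated to the polynomial vector
field `f`: `φ̇ = Σ_x (∂φ/∂x)·f x`. -/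
noncomputable def lieD [Fintype σ] (f : σ → MvPolynomial σ ℝ)
    (φ : MvPolynomial σ ℝ) : MvPolynomial σ ℝ :=
  ∑ x : σ, MvPolynomial.pderiv x φ * f x

/-- Iterated total (Lie) derivative. -/
noncomputable def lieDIter [Fintype σ] (f : σ → MvPolynomial σ ℝ) :
    ℕ → MvPolynomial σ ℝ → MvPolynomial σ ℝ
  | 0, φ => φ
  | n + 1, φ => lieD f (lieDIter f n φ)

/-- Indicator of a species inside a complex, as a real number. -/
def ind [DecidableEq σ] (a x : σ) : ℝ := if a = x then 1 else 0

/-- A chemical reaction network of the structural form of Assumption 1: the connected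
components are indexed by `ι`; component `i` is
`Y i + S i 0 ⇄ U i 1 → Y i + S i 1 ⇄ U i 2 → ⋯ ⇄ U i (L i) → Y i + S i (L i)`,
with rate constants `a_{i,j}, b_{i,j}, c_{i,j}` for the reactions
`Y i + S i (j-1) → U i j`, `U i j → Y i + S i (j-1)`, `U i j → Y i + S i j`
(`1 ≤ j ≤ L i`). Only the values `S i j` for `j ≤ L i` and `U i j` for
`1 ≤ j ≤ L i` are relevant. -/
structure A1Network (σ : Type*) where
  ι : Type
  [fintypeι : Fintype ι]
  L : ι → ℕ
  Lpos : ∀ i, 1 ≤ L i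
  Y : ι → σ
  S : ι → ℕ → σ
  U : ι → ℕ → σ

attribute [instance] A1Network.fintypeι

namespace A1Network

variable [Fintype σ] [DecidableEq σ]

/-- Rate-constant index: component `i`, block `j+1` (for `j : Fin (L i)`), and
`0, 1, 2` for the constants `a, b, c` of the block. -/
def Param (N : A1Network σ) : Type := (i : N.ι) × Fin (N.L i) × Fin 3

instance (N : A1Network σ) : Fintype N.Param :=
  inferInstanceAs (Fintype ((i : N.ι) × Fin (N.L i) × Fin 3))

/-- `x` is an intermediate species of the network. -/
def inter (N : A1Network σ) (x : σ) : Prop :=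
  ∃ i, ∃ j : Fin (N.L i), x = N.U i ((j : ℕ) + 1)

/-- The non-intermediate `x₁` reacts with the non-intermediate `x₂`
(a reaction `x₁ + x₂ → U` exists). -/
def reactsWith (N : A1Network σ) (x₁ x₂ : σ) : Prop :=
  ∃ i, ∃ j : Fin (N.L i),
    (x₁ = N.Y i ∧ x₂ = N.S i (j : ℕ)) ∨ (x₂ = N.Y i ∧ x₁ = N.S i (j : ℕ))

/-- The intermediate `u` reacts to the non-intermediate `x`
(a reaction `u → x + X₂` exists). -/
def reactsTo (N : A1Network σ) (u x : σ) : Prop :=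
  ∃ i, ∃ j : Fin (N.L i), u = N.U i ((j : ℕ) + 1) ∧
    (x = N.Y i ∨ x = N.S i (j : ℕ) ∨ x = N.S i ((j : ℕ) + 1))

/-- The distinctness/uniqueness requirements of Assumption 1: the intermediates of the
entire network are pairwise distinct and distinct from all non-intermediates; the
non-intermediates of one component are pairwise distinct; each complex lies in a
unique connected component. -/
structure Assumption1 (N : A1Network σ) : Prop where
  U_inj : ∀ i (j : Fin (N.L i)) i' (j' : Fin (N.L i')),
    N.U i ((j : ℕ) + 1) = N.U i' ((j' : ℕ) + 1) → i = i' ∧ (j : ℕ) = (j' : ℕ)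
  U_ne_Y : ∀ i (j : Fin (N.L i)) i', N.U i ((j : ℕ) + 1) ≠ N.Y i'
  U_ne_S : ∀ i (j : Fin (N.L i)) i' j', j' ≤ N.L i' → N.U i ((j : ℕ) + 1) ≠ N.S i' j'
  S_inj : ∀ i j j', j ≤ N.L i → j' ≤ N.L i → N.S i j = N.S i j' → j = j'
  complex_unique : ∀ i i' j j', j ≤ N.L i → j' ≤ N.L i' →
    (∀ x : σ, ind (N.Y i) x + ind (N.S i j) x = ind (N.Y i') x + ind (N.S i' j') x) →
    i = i'

/-- `part` is a partition of the species as in Assumption 2: intermediates form class `0`;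
all the substrates and products of a component lie in one class `α ≥ 1` which contains
neither the enzyme of the component nor any intermediate. -/
def IsPartition (N : A1Network σ) (part : σ → ℕ) : Prop :=
  (∀ x, N.inter x → part x = 0) ∧
  (∀ i : N.ι, ∃ α, 1 ≤ α ∧ (∀ j, j ≤ N.L i → part (N.S i j) = α) ∧
    part (N.Y i) ≠ α ∧ part (N.Y i) ≠ 0)

/-- Assumption 2: there exists a partition as above. -/
def Assumption2 (N : A1Network σ) : Prop := ∃ part, N.IsPartition part

/-- The mass-action right-hand side of the induced dynamical system:
`ẋ = Σ_{y→y'} k_{yy'} x^y (y'-y)`. -/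
noncomputable def rhs (N : A1Network σ) (k : N.Param → ℝ) (x : σ) : MvPolynomial σ ℝ :=
  ∑ i : N.ι, ∑ j : Fin (N.L i),
    (C (k ⟨i, j, 0⟩ *
          (ind (N.U i ((j : ℕ) + 1)) x - ind (N.Y i) x - ind (N.S i (j : ℕ)) x)) *
        (X (N.Y i) * X (N.S i (j : ℕ)))
      + C (k ⟨i, j, 1⟩ *
          (ind (N.Y i) x + ind (N.S i (j : ℕ)) x - ind (N.U i ((j : ℕ) + 1)) x)) *
        X (N.U i ((j : ℕ) + 1))
      + C (k ⟨i, j, 2⟩ *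
          (ind (N.Y i) x + ind (N.S i ((j : ℕ) + 1)) x - ind (N.U i ((j : ℕ) + 1)) x)) *
        X (N.U i ((j : ℕ) + 1)))

/-- `x^{(ℓ)}(x, k)`: the `ℓ`-th iterated total derivative of the variable `x`. -/
noncomputable def deriv (N : A1Network σ) (k : N.Param → ℝ) (ℓ : ℕ) (x : σ) :
    MvPolynomial σ ℝ :=
  lieDIter (N.rhs k) ℓ (X x)

/-- The map `ψ` on rate constants is identifiable from the set of variables `T` with `D`
derivatives: whenever two positive rate vectors give the same derivatives
`x^{(ℓ)}`, `1 ≤ ℓ ≤ D`, `x ∈ T`, as polynomials, the values of `ψ` agree. -/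
def IdentifiableFrom {α : Type*} (N : A1Network σ) (ψ : (N.Param → ℝ) → α)
    (T : Set σ) (D : ℕ) : Prop :=
  ∀ k₁ k₂ : N.Param → ℝ, (∀ r, 0 < k₁ r) → (∀ r, 0 < k₂ r) →
    (∀ x ∈ T, ∀ ℓ, 1 ≤ ℓ → ℓ ≤ D → N.deriv k₁ ℓ x = N.deriv k₂ ℓ x) →
    ψ k₁ = ψ k₂

section Aux
set_option linter.unusedSectionVars false
set_option linter.all false
variable [Fintype σ] [DecidableEq σ]

lemma lieD_add (f : σ → MvPolynomial σ ℝ) (p q : MvPolynomial σ ℝ) :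
    lieD f (p + q) = lieD f p + lieD f q := by
  simp [lieD, add_mul, Finset.sum_add_distrib]

lemma lieD_sub (f : σ → MvPolynomial σ ℝ) (p q : MvPolynomial σ ℝ) :
    lieD f (p - q) = lieD f p - lieD f q := by
  simp [lieD, sub_mul, Finset.sum_sub_distrib]

lemma lieD_sum {γ : Type*} (f : σ → MvPolynomial σ ℝ) (s : Finset γ)
    (g : γ → MvPolynomial σ ℝ) :
    lieD f (∑ c ∈ s, g c) = ∑ c ∈ s, lieD f (g c) := by
  simp only [lieD, map_sum, Finset.sum_mul]
  rw [Finset.sum_comm]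

lemma lieD_mul (f : σ → MvPolynomial σ ℝ) (p q : MvPolynomial σ ℝ) :
    lieD f (p * q) = lieD f p * q + p * lieD f q := by
  simp only [lieD, pderiv_mul, add_mul, Finset.sum_add_distrib, Finset.sum_mul, Finset.mul_sum]
  congr 1 <;> exact Finset.sum_congr rfl fun x _ => by ring

lemma lieD_C (f : σ → MvPolynomial σ ℝ) (r : ℝ) : lieD f (C r) = 0 := by
  simp [lieD, pderiv_C]

lemma lieD_C_mul (f : σ → MvPolynomial σ ℝ) (r : ℝ) (p : MvPolynomial σ ℝ) :
    lieD f (C r * p) = C r * lieD f p := by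
  rw [lieD_mul, lieD_C, zero_mul, zero_add]

lemma lieD_X (f : σ → MvPolynomial σ ℝ) (a : σ) : lieD f (X a) = f a := by
  unfold lieD
  rw [Finset.sum_eq_single a]
  · simp
  · intro x _ hx; rw [pderiv_X_of_ne (Ne.symm hx), zero_mul]
  · intro h; exact absurd (Finset.mem_univ a) h

lemma lieD_X_mul_X (f : σ → MvPolynomial σ ℝ) (a b : σ) :
    lieD f (X a * X b) = f a * X b + X a * f b := by
  rw [lieD_mul, lieD_X, lieD_X]

/-! ### Finsupp helpers -/

noncomputable def sgl (z : σ) : σ →₀ ℕ := Finsupp.single z 1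

def mdeg (m : σ →₀ ℕ) : ℕ := m.sum fun _ n => n

@[simp] lemma mdeg_single (z : σ) : mdeg (sgl z) = 1 := by
  simp [mdeg, sgl, Finsupp.sum_single_index]

@[simp] lemma mdeg_add (m m' : σ →₀ ℕ) : mdeg (m + m') = mdeg m + mdeg m' :=
  Finsupp.sum_add_index' (fun _ => rfl) (fun _ _ _ => rfl)

lemma sgl_apply (z w : σ) : sgl z w = if z = w then 1 else 0 := Finsupp.single_apply

lemma sgl_inj {a b : σ} (h : sgl a = sgl b) : a = b :=
  Finsupp.single_left_injective one_ne_zero h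

lemma pair_ne_sgl (a b c : σ) : sgl a + sgl b ≠ sgl c := fun h => by
  have := congrArg mdeg h
  simp at this

lemma sgl_apply_self (a : σ) : sgl a a = 1 := Finsupp.single_eq_same

lemma sgl_apply_ne {a w : σ} (h : a ≠ w) : sgl a w = 0 := Finsupp.single_eq_of_ne' h

lemma pair_eq_pair_iff {a b c d : σ} :
    sgl a + sgl b = sgl c + sgl d ↔ (a = c ∧ b = d) ∨ (a = d ∧ b = c) := by
  constructor
  · intro h
    by_cases hac : a = c
    · subst hac
      exact Or.inl ⟨rfl, sgl_inj (add_left_cancel h)⟩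
    · have h1 := congrArg (fun m => m a) h
      simp only [Finsupp.add_apply] at h1
      rw [sgl_apply_self, sgl_apply_ne (fun hc : c = a => hac hc.symm)] at h1
      have hda : d = a := by
        by_contra hda
        rw [sgl_apply_ne hda] at h1
        omega
      subst hda
      refine Or.inr ⟨rfl, ?_⟩
      have h2 : sgl d + sgl b = sgl d + sgl c := by
        rw [h, add_comm]
      exact sgl_inj (add_left_cancel h2)
  · rintro (⟨rfl, rfl⟩ | ⟨rfl, rfl⟩)
    · rfl
    · exact add_comm _ _

lemma mem_pair_support {a b w : σ} :
    w ∈ (sgl a + sgl b).support ↔ (w = a ∨ w = b) := by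
  rw [Finsupp.mem_support_iff]
  simp only [Finsupp.add_apply, sgl_apply]
  split_ifs with h1 h2 <;> simp_all [eq_comm]

lemma mem_triple_support {a b c w : σ} :
    w ∈ (sgl a + sgl b + sgl c).support ↔ (w = a ∨ w = b ∨ w = c) := by
  rw [Finsupp.mem_support_iff]
  simp only [Finsupp.add_apply, sgl_apply]
  split_ifs with h1 h2 h3 <;> simp_all [eq_comm]

lemma coeff_mul_X_pair (p : MvPolynomial σ ℝ) {a b : σ} (hab : a ≠ b) (s : σ) :
    coeff (sgl a + sgl b) (p * X s) =
      if s = a then coeff (sgl b) p else if s = b then coeff (sgl a) p else 0 := by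
  rw [coeff_mul_X']
  by_cases hsa : s = a
  · subst hsa
    rw [if_pos (mem_pair_support.mpr (Or.inl rfl)), if_pos rfl]
    congr 1
    exact add_tsub_cancel_left (sgl s) (sgl b)
  · by_cases hsb : s = b
    · subst hsb
      rw [if_pos (mem_pair_support.mpr (Or.inr rfl)), if_neg hsa, if_pos rfl]
      congr 1
      exact add_tsub_cancel_right (sgl a) (sgl s)
    · rw [if_neg (fun h => by rcases mem_pair_support.mp h with h | h <;> simp_all),
        if_neg hsa, if_neg hsb]

lemma coeff_mul_X_triple (p : MvPolynomial σ ℝ) {a b c : σ} (s : σ) :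
    coeff (sgl a + sgl b + sgl c) (p * X s) =
      if s = a then coeff ((sgl a + sgl b + sgl c) - sgl a) p
      else if s = b then coeff ((sgl a + sgl b + sgl c) - sgl b) p
      else if s = c then coeff ((sgl a + sgl b + sgl c) - sgl c) p else 0 := by
  rw [coeff_mul_X']
  by_cases hsa : s = a
  · subst hsa; rw [if_pos (mem_triple_support.mpr (Or.inl rfl)), if_pos rfl]; rfl
  · by_cases hsb : s = b
    · subst hsb
      rw [if_pos (mem_triple_support.mpr (Or.inr (Or.inl rfl))), if_neg hsa, if_pos rfl]; rfl
    · by_cases hsc : s = c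
      · subst hsc
        rw [if_pos (mem_triple_support.mpr (Or.inr (Or.inr rfl))), if_neg hsa, if_neg hsb,
          if_pos rfl]; rfl
      · rw [if_neg (fun h => by rcases mem_triple_support.mp h with h | h | h <;> simp_all),
          if_neg hsa, if_neg hsb, if_neg hsc]

lemma triple_sub_left (a b c : σ) : (sgl a + sgl b + sgl c) - sgl a = sgl b + sgl c := by
  rw [show sgl a + sgl b + sgl c = sgl a + (sgl b + sgl c) from add_assoc _ _ _]
  exact add_tsub_cancel_left _ _

lemma triple_sub_mid (a b c : σ) : (sgl a + sgl b + sgl c) - sgl b = sgl a + sgl c := by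
  rw [show sgl a + sgl b + sgl c = sgl b + (sgl a + sgl c) by
    rw [add_right_comm, add_comm (sgl a + sgl c) (sgl b)]]
  exact add_tsub_cancel_left _ _

lemma triple_sub_right (a b c : σ) : (sgl a + sgl b + sgl c) - sgl c = sgl a + sgl b :=
  add_tsub_cancel_right _ _

/-! ### monomial forms -/

lemma C_mul_XX (r : ℝ) (a b : σ) :
    C r * (X a * X b) = monomial (sgl a + sgl b) r := by
  rw [X, X, monomial_mul, C_apply, monomial_mul]
  simp [sgl]

lemma C_mul_Xone (r : ℝ) (a : σ) : (C r * X a : MvPolynomial σ ℝ) = monomial (sgl a) r := by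
  rw [X, C_apply, monomial_mul]
  simp [sgl]

end Aux

section NetAux
open scoped Classical

lemma ind_self (a : σ) : ind a a = 1 := if_pos rfl

lemma ind_ne {a x : σ} (h : a ≠ x) : ind a x = 0 := if_neg h

variable {N : A1Network σ}

/-- `z` is not an intermediate species. -/
def NonInt (N : A1Network σ) (z : σ) : Prop :=
  ∀ p (r : Fin (N.L p)), N.U p ((r : ℕ) + 1) ≠ z

lemma nonInt_Y (h1 : N.Assumption1) (i : N.ι) : N.NonInt (N.Y i) :=
  fun p r => h1.U_ne_Y p r i

lemma nonInt_S (h1 : N.Assumption1) (i : N.ι) (m : ℕ) (hm : m ≤ N.L i) :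
    N.NonInt (N.S i m) :=
  fun p r => h1.U_ne_S p r i m hm

/-- The coefficient of the complex `Y+S` monomial in the rhs. -/
noncomputable def AAc (N : A1Network σ) (k : N.Param → ℝ) (x : σ) (i : N.ι)
    (j : Fin (N.L i)) : ℝ :=
  k ⟨i, j, 0⟩ * (ind (N.U i ((j : ℕ) + 1)) x - ind (N.Y i) x - ind (N.S i (j : ℕ)) x)

/-- The coefficient of the intermediate monomial in the rhs. -/
noncomputable def BBc (N : A1Network σ) (k : N.Param → ℝ) (x : σ) (i : N.ι)
    (j : Fin (N.L i)) : ℝ :=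
  k ⟨i, j, 1⟩ * (ind (N.Y i) x + ind (N.S i (j : ℕ)) x - ind (N.U i ((j : ℕ) + 1)) x) +
  k ⟨i, j, 2⟩ * (ind (N.Y i) x + ind (N.S i ((j : ℕ) + 1)) x - ind (N.U i ((j : ℕ) + 1)) x)

lemma rhs_eq (k : N.Param → ℝ) (x : σ) :
    N.rhs k x = ∑ i : N.ι, ∑ j : Fin (N.L i), (C (N.AAc k x i j) * (X (N.Y i) * X (N.S i (j : ℕ)))
      + C (N.BBc k x i j) * X (N.U i ((j : ℕ) + 1))) := by
  unfold rhs AAc BBc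
  refine Finset.sum_congr rfl fun i _ => Finset.sum_congr rfl fun j _ => ?_
  rw [map_add, add_mul, add_assoc]

lemma sum_sum_eq_single (g : (i : N.ι) → Fin (N.L i) → ℝ) (p : N.ι) (q : Fin (N.L p))
    (h0 : ∀ i (j : Fin (N.L i)), ¬(i = p ∧ (j : ℕ) = (q : ℕ)) → g i j = 0) :
    ∑ i : N.ι, ∑ j : Fin (N.L i), g i j = g p q := by
  rw [Finset.sum_eq_single p]
  · rw [Finset.sum_eq_single q]
    · intro j _ hj
      exact h0 p j (fun hh => hj (Fin.ext hh.2))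
    · intro h; exact absurd (Finset.mem_univ q) h
  · intro i _ hi
    exact Finset.sum_eq_zero fun j _ => h0 i j (fun hh => hi hh.1)
  · intro h; exact absurd (Finset.mem_univ p) h

lemma sum_sum_eq_zero (g : (i : N.ι) → Fin (N.L i) → ℝ)
    (h0 : ∀ i (j : Fin (N.L i)), g i j = 0) :
    ∑ i : N.ι, ∑ j : Fin (N.L i), g i j = 0 := by
  simp [h0]

/-- Coefficient of a single intermediate variable in the rhs. -/
lemma coeff_rhs_sgl_U (h1 : N.Assumption1) (k : N.Param → ℝ) (x : σ) (p : N.ι)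
    (q : Fin (N.L p)) :
    coeff (sgl (N.U p ((q : ℕ) + 1))) (N.rhs k x) = N.BBc k x p q := by
  rw [rhs_eq]
  simp only [coeff_sum]
  have hterm : ∀ i (j : Fin (N.L i)),
      coeff (sgl (N.U p ((q : ℕ) + 1)))
        (C (N.AAc k x i j) * (X (N.Y i) * X (N.S i (j : ℕ)))
          + C (N.BBc k x i j) * X (N.U i ((j : ℕ) + 1)))
      = if N.U i ((j : ℕ) + 1) = N.U p ((q : ℕ) + 1) then N.BBc k x i j else 0 := by
    intro i j
    rw [coeff_add, C_mul_XX, C_mul_Xone, coeff_monomial, coeff_monomial,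
      if_neg (pair_ne_sgl _ _ _), zero_add]
    by_cases h : N.U i ((j : ℕ) + 1) = N.U p ((q : ℕ) + 1)
    · rw [if_pos (by rw [h]), if_pos h]
    · rw [if_neg (fun hh => h (sgl_inj hh)), if_neg h]
  simp only [hterm]
  rw [sum_sum_eq_single _ p q]
  · rw [if_pos rfl]
  · intro i j hij
    exact if_neg fun h => hij (h1.U_inj i j p q h)

/-- Coefficient of a single non-intermediate variable in the rhs. -/
lemma coeff_rhs_sgl_nonInt (k : N.Param → ℝ) (x : σ) {z : σ} (hz : N.NonInt z) :
    coeff (sgl z) (N.rhs k x) = 0 := by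
  rw [rhs_eq]
  simp only [coeff_sum]
  refine sum_sum_eq_zero _ fun i j => ?_
  rw [coeff_add, C_mul_XX, C_mul_Xone, coeff_monomial, coeff_monomial,
    if_neg (pair_ne_sgl _ _ _), zero_add, if_neg fun hh => hz i j (sgl_inj hh)]

/-- The rhs has no monomials of degree other than 1 and 2. -/
lemma coeff_rhs_mdeg (k : N.Param → ℝ) (x : σ) {m : σ →₀ ℕ}
    (hm2 : mdeg m ≠ 2) (hm1 : mdeg m ≠ 1) :
    coeff m (N.rhs k x) = 0 := by
  rw [rhs_eq]
  simp only [coeff_sum]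
  refine sum_sum_eq_zero _ fun i j => ?_
  rw [coeff_add, C_mul_XX, C_mul_Xone, coeff_monomial, coeff_monomial,
    if_neg (fun h => hm2 (by rw [← h]; simp)),
    if_neg (fun h => hm1 (by rw [← h]; simp)), add_zero]

/-- Coefficient of a pair monomial in the rhs : general formula. -/
lemma coeff_rhs_pair (k : N.Param → ℝ) (x : σ) (z₁ z₂ : σ) :
    coeff (sgl z₁ + sgl z₂) (N.rhs k x) =
      ∑ i : N.ι, ∑ j : Fin (N.L i), (if (N.Y i = z₁ ∧ N.S i (j : ℕ) = z₂) ∨ (N.Y i = z₂ ∧ N.S i (j : ℕ) = z₁)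
        then N.AAc k x i j else 0) := by
  rw [rhs_eq]
  simp only [coeff_sum]
  refine Finset.sum_congr rfl fun i _ => Finset.sum_congr rfl fun j _ => ?_
  rw [coeff_add, C_mul_XX, C_mul_Xone, coeff_monomial, coeff_monomial,
    if_neg (show ¬ sgl (N.U i ((j : ℕ) + 1)) = sgl z₁ + sgl z₂ from
      fun h => by have := congrArg mdeg h; simp at this), add_zero,
    if_congr pair_eq_pair_iff rfl rfl]

/-- The rhs at an intermediate species. -/
lemma rhs_U_eq (h1 : N.Assumption1) (k : N.Param → ℝ) (p : N.ι) (q : Fin (N.L p)) :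
    N.rhs k (N.U p ((q : ℕ) + 1)) =
      C (k ⟨p, q, 0⟩) * (X (N.Y p) * X (N.S p (q : ℕ)))
        - C (k ⟨p, q, 1⟩ + k ⟨p, q, 2⟩) * X (N.U p ((q : ℕ) + 1)) := by
  rw [rhs_eq]
  have hterm : ∀ i (j : Fin (N.L i)),
      (C (N.AAc k (N.U p ((q : ℕ) + 1)) i j) * (X (N.Y i) * X (N.S i (j : ℕ)))
        + C (N.BBc k (N.U p ((q : ℕ) + 1)) i j) * X (N.U i ((j : ℕ) + 1)))
      = if i = p ∧ (j : ℕ) = (q : ℕ) then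
          (C (k ⟨p, q, 0⟩) * (X (N.Y p) * X (N.S p (q : ℕ)))
            - C (k ⟨p, q, 1⟩ + k ⟨p, q, 2⟩) * X (N.U p ((q : ℕ) + 1))) else 0 := by
    intro i j
    have hY : ind (N.Y i) (N.U p ((q : ℕ) + 1)) = 0 := ind_ne (h1.U_ne_Y p q i).symm
    have hS : ind (N.S i (j : ℕ)) (N.U p ((q : ℕ) + 1)) = 0 :=
      ind_ne (h1.U_ne_S p q i (j : ℕ) (le_of_lt j.isLt)).symm
    have hS' : ind (N.S i ((j : ℕ) + 1)) (N.U p ((q : ℕ) + 1)) = 0 :=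
      ind_ne (h1.U_ne_S p q i ((j : ℕ) + 1) j.isLt).symm
    by_cases h : i = p ∧ (j : ℕ) = (q : ℕ)
    · obtain ⟨hi, hj⟩ := h
      subst hi
      have hj' : j = q := Fin.ext hj
      subst hj'
      rw [if_pos ⟨rfl, rfl⟩]
      unfold AAc BBc
      rw [hY, hS, hS', ind_self,
        show (k ⟨i, j, 0⟩ * (1 - 0 - 0) : ℝ) = k ⟨i, j, 0⟩ by ring,
        show (k ⟨i, j, 1⟩ * (0 + 0 - 1) + k ⟨i, j, 2⟩ * (0 + 0 - 1) : ℝ)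
          = -(k ⟨i, j, 1⟩ + k ⟨i, j, 2⟩) by ring,
        map_neg, neg_mul, ← sub_eq_add_neg]
    · rw [if_neg h]
      have hU : ind (N.U i ((j : ℕ) + 1)) (N.U p ((q : ℕ) + 1)) = 0 :=
        ind_ne (fun hh => h (h1.U_inj i j p q hh))
      unfold AAc BBc
      rw [hY, hS, hS', hU,
        show (k ⟨i, j, 0⟩ * (0 - 0 - 0) : ℝ) = 0 by ring,
        show (k ⟨i, j, 1⟩ * (0 + 0 - 0) + k ⟨i, j, 2⟩ * (0 + 0 - 0) : ℝ) = 0 by ring]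
      simp
  simp only [hterm]
  rw [Finset.sum_eq_single p]
  · rw [Finset.sum_eq_single q]
    · rw [if_pos ⟨rfl, rfl⟩]
    · intro j _ hj
      exact if_neg fun hh => hj (Fin.ext hh.2)
    · intro h; exact absurd (Finset.mem_univ q) h
  · intro i _ hi
    exact Finset.sum_eq_zero fun j _ => if_neg fun hh => hi hh.1
  · intro h; exact absurd (Finset.mem_univ p) h

end NetAux


section NetAux2
open scoped Classical

variable {N : A1Network σ}

lemma mdeg_zero : mdeg (0 : σ →₀ ℕ) = 0 := rfl

lemma coeff_mul_X_sgl (p : MvPolynomial σ ℝ) (a s : σ) :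
    coeff (sgl a) (p * X s) = if s = a then coeff 0 p else 0 := by
  rw [coeff_mul_X']
  by_cases hsa : s = a
  · subst hsa
    rw [if_pos (by rw [Finsupp.mem_support_iff, sgl_apply_self]; norm_num), if_pos rfl,
      show sgl s - Finsupp.single s 1 = 0 from tsub_self _]
  · rw [if_neg (fun h => hsa (by
      have hne := Finsupp.mem_support_iff.mp h
      by_contra hcon
      exact hne (sgl_apply_ne (fun hh => hcon hh.symm)))), if_neg hsa]

lemma X_as_monomial (a : σ) : (X a : MvPolynomial σ ℝ) = monomial (sgl a) 1 := rfl

/-- The second Lie derivative of a coordinate: `lieD f (f x)`. -/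
noncomputable def QQ (N : A1Network σ) (k : N.Param → ℝ) (x : σ) : MvPolynomial σ ℝ :=
  lieD (N.rhs k) (N.rhs k x)

lemma QQ_eq (k : N.Param → ℝ) (x : σ) : N.QQ k x = ∑ i : N.ι, ∑ j : Fin (N.L i),
    (C (N.AAc k x i j) * (N.rhs k (N.Y i) * X (N.S i (j : ℕ))
        + X (N.Y i) * N.rhs k (N.S i (j : ℕ)))
      + C (N.BBc k x i j) * N.rhs k (N.U i ((j : ℕ) + 1))) := by
  unfold QQ
  conv_lhs => rw [rhs_eq]
  rw [lieD_sum]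
  refine Finset.sum_congr rfl fun i _ => ?_
  rw [lieD_sum]
  refine Finset.sum_congr rfl fun j _ => ?_
  rw [lieD_add, lieD_C_mul, lieD_C_mul, lieD_X_mul_X, lieD_X]

lemma QQ_U_eq (h1 : N.Assumption1) (k : N.Param → ℝ) (p : N.ι) (q : Fin (N.L p)) :
    N.QQ k (N.U p ((q : ℕ) + 1)) =
      C (k ⟨p, q, 0⟩) * (N.rhs k (N.Y p) * X (N.S p (q : ℕ))
          + X (N.Y p) * N.rhs k (N.S p (q : ℕ)))
        - C (k ⟨p, q, 1⟩ + k ⟨p, q, 2⟩) * N.rhs k (N.U p ((q : ℕ) + 1)) := by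
  unfold QQ
  conv_lhs => rw [rhs_U_eq h1]
  rw [lieD_sub, lieD_C_mul, lieD_C_mul, lieD_X_mul_X, lieD_X]

lemma coeff_zero_rhs (k : N.Param → ℝ) (x : σ) : coeff (0 : σ →₀ ℕ) (N.rhs k x) = 0 :=
  coeff_rhs_mdeg k x (by rw [mdeg_zero]; omega) (by rw [mdeg_zero]; omega)

lemma BBc_U (h1 : N.Assumption1) (k : N.Param → ℝ) (i : N.ι) (j : Fin (N.L i))
    (p : N.ι) (q : Fin (N.L p)) :
    N.BBc k (N.U i ((j : ℕ) + 1)) p q =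
      if N.U i ((j : ℕ) + 1) = N.U p ((q : ℕ) + 1) then
        -(k ⟨p, q, 1⟩ + k ⟨p, q, 2⟩) else 0 := by
  unfold BBc
  rw [ind_ne (h1.U_ne_Y i j p).symm,
    ind_ne (h1.U_ne_S i j p (q : ℕ) (le_of_lt q.isLt)).symm,
    ind_ne (h1.U_ne_S i j p ((q : ℕ) + 1) q.isLt).symm]
  by_cases h : N.U i ((j : ℕ) + 1) = N.U p ((q : ℕ) + 1)
  · rw [if_pos h, show ind (N.U p ((q : ℕ) + 1)) (N.U i ((j : ℕ) + 1)) = 1 from if_pos h.symm]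
    ring
  · rw [if_neg h, ind_ne (fun hh => h hh.symm)]
    ring

lemma AAc_U (h1 : N.Assumption1) (k : N.Param → ℝ) (i : N.ι) (j : Fin (N.L i))
    (p : N.ι) (q : Fin (N.L p)) :
    N.AAc k (N.U i ((j : ℕ) + 1)) p q =
      if N.U i ((j : ℕ) + 1) = N.U p ((q : ℕ) + 1) then k ⟨p, q, 0⟩ else 0 := by
  unfold AAc
  rw [ind_ne (h1.U_ne_Y i j p).symm,
    ind_ne (h1.U_ne_S i j p (q : ℕ) (le_of_lt q.isLt)).symm]
  by_cases h : N.U i ((j : ℕ) + 1) = N.U p ((q : ℕ) + 1)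
  · rw [if_pos h, show ind (N.U p ((q : ℕ) + 1)) (N.U i ((j : ℕ) + 1)) = 1 from if_pos h.symm]
    ring
  · rw [if_neg h, ind_ne (fun hh => h hh.symm)]
    ring

/-- Coefficient of a single intermediate variable in `QQ`. -/
lemma coeff_QQ_sgl_U (h1 : N.Assumption1) (k : N.Param → ℝ) (x : σ) (p : N.ι)
    (q : Fin (N.L p)) :
    coeff (sgl (N.U p ((q : ℕ) + 1))) (N.QQ k x)
      = -(N.BBc k x p q * (k ⟨p, q, 1⟩ + k ⟨p, q, 2⟩)) := by
  rw [QQ_eq]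
  simp only [coeff_sum]
  have hterm : ∀ i (j : Fin (N.L i)),
      coeff (sgl (N.U p ((q : ℕ) + 1)))
        (C (N.AAc k x i j) * (N.rhs k (N.Y i) * X (N.S i (j : ℕ))
            + X (N.Y i) * N.rhs k (N.S i (j : ℕ)))
          + C (N.BBc k x i j) * N.rhs k (N.U i ((j : ℕ) + 1)))
      = if N.U i ((j : ℕ) + 1) = N.U p ((q : ℕ) + 1) then
          -(N.BBc k x i j * (k ⟨p, q, 1⟩ + k ⟨p, q, 2⟩)) else 0 := by
    intro i j
    rw [coeff_add, coeff_C_mul, coeff_C_mul, coeff_add, coeff_mul_X_sgl,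
      mul_comm (X (N.Y i)) (N.rhs k (N.S i (j : ℕ))), coeff_mul_X_sgl,
      coeff_rhs_sgl_U h1, BBc_U h1]
    simp only [coeff_zero_rhs, ite_self]
    split_ifs with h <;> ring
  simp only [hterm]
  rw [sum_sum_eq_single _ p q]
  · rw [if_pos rfl]
  · intro i j hij
    exact if_neg fun h => hij (h1.U_inj i j p q h)

/-- Coefficient of a single non-intermediate variable in `QQ`. -/
lemma coeff_QQ_sgl_nonInt (k : N.Param → ℝ) (x : σ) {z : σ} (hz : N.NonInt z) :
    coeff (sgl z) (N.QQ k x) = 0 := by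
  rw [QQ_eq]
  simp only [coeff_sum]
  refine sum_sum_eq_zero _ fun i j => ?_
  rw [coeff_add, coeff_C_mul, coeff_C_mul, coeff_add, coeff_mul_X_sgl,
    mul_comm (X (N.Y i)) (N.rhs k (N.S i (j : ℕ))), coeff_mul_X_sgl,
    coeff_rhs_sgl_nonInt k _ hz]
  simp only [coeff_zero_rhs, ite_self]
  ring

/-- Coefficient of a pair monomial of non-intermediates in `QQ`: general formula. -/
lemma coeff_QQ_pair (h1 : N.Assumption1) (k : N.Param → ℝ) (x : σ) {z₁ z₂ : σ}
    (h12 : z₁ ≠ z₂) (hz₁ : N.NonInt z₁) (hz₂ : N.NonInt z₂) :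
    coeff (sgl z₁ + sgl z₂) (N.QQ k x) =
      ∑ i : N.ι, ∑ j : Fin (N.L i),
        (if (N.Y i = z₁ ∧ N.S i (j : ℕ) = z₂) ∨ (N.Y i = z₂ ∧ N.S i (j : ℕ) = z₁)
          then N.BBc k x i j * k ⟨i, j, 0⟩ else 0) := by
  rw [QQ_eq]
  simp only [coeff_sum]
  refine Finset.sum_congr rfl fun i _ => Finset.sum_congr rfl fun j _ => ?_
  have hz1' : ∀ w, coeff (sgl z₁) (N.rhs k w) = 0 := fun w => coeff_rhs_sgl_nonInt k w hz₁
  have hz2' : ∀ w, coeff (sgl z₂) (N.rhs k w) = 0 := fun w => coeff_rhs_sgl_nonInt k w hz₂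
  rw [coeff_add, coeff_C_mul, coeff_C_mul, coeff_add, coeff_mul_X_pair _ h12,
    mul_comm (X (N.Y i)) (N.rhs k (N.S i (j : ℕ))), coeff_mul_X_pair _ h12,
    rhs_U_eq h1, coeff_sub, C_mul_XX, C_mul_Xone, coeff_monomial, coeff_monomial,
    if_neg (show ¬ sgl (N.U i ((j : ℕ) + 1)) = sgl z₁ + sgl z₂ from
      fun h => by have := congrArg mdeg h; simp at this),
    if_congr pair_eq_pair_iff rfl rfl]
  simp only [hz1', hz2', ite_self]
  split_ifs with h <;> ring

/-- Degree-two coefficients of a product of two rhs's vanish when the monomial contains a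
non-intermediate. -/
lemma coeff_rhs_mul_rhs_two (k : N.Param → ℝ) (x x' : σ) {z₁ z₂ : σ}
    (hz₂ : N.NonInt z₂) :
    coeff (sgl z₁ + sgl z₂) (N.rhs k x * N.rhs k x') = 0 := by
  rw [rhs_eq k x, rhs_eq k x', Finset.sum_mul_sum]
  simp only [Finset.sum_mul_sum, coeff_sum]
  refine Finset.sum_eq_zero fun i _ => Finset.sum_eq_zero fun i' _ => ?_
  refine Finset.sum_eq_zero fun j _ => Finset.sum_eq_zero fun j' _ => ?_
  rw [C_mul_XX, C_mul_Xone, C_mul_XX, C_mul_Xone, add_mul, mul_add, mul_add,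
    monomial_mul, monomial_mul, monomial_mul, monomial_mul,
    coeff_add, coeff_add, coeff_add, coeff_monomial, coeff_monomial, coeff_monomial,
    coeff_monomial,
    if_neg (show ¬ sgl (N.Y i) + sgl (N.S i (j : ℕ)) + (sgl (N.Y i') + sgl (N.S i' (j' : ℕ)))
        = sgl z₁ + sgl z₂ from fun h => by have := congrArg mdeg h; simp at this),
    if_neg (show ¬ sgl (N.Y i) + sgl (N.S i (j : ℕ)) + sgl (N.U i' ((j' : ℕ) + 1))
        = sgl z₁ + sgl z₂ from fun h => by have := congrArg mdeg h; simp at this),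
    if_neg (show ¬ sgl (N.U i ((j : ℕ) + 1)) + (sgl (N.Y i') + sgl (N.S i' (j' : ℕ)))
        = sgl z₁ + sgl z₂ from fun h => by have := congrArg mdeg h; simp at this),
    if_neg (show ¬ sgl (N.U i ((j : ℕ) + 1)) + sgl (N.U i' ((j' : ℕ) + 1))
        = sgl z₁ + sgl z₂ from fun h => by
      have h2 := congrArg (fun mm => mm z₂) h
      simp only [Finsupp.add_apply] at h2
      rw [sgl_apply_ne (hz₂ i j), sgl_apply_ne (hz₂ i' j'), sgl_apply_self] at h2
      omega)]
  norm_num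

/-- Degree-three coefficients of a product of two rhs's vanish when the monomial consists of
non-intermediates. -/
lemma coeff_rhs_mul_rhs_three (k : N.Param → ℝ) (x x' : σ) {a b c : σ}
    (ha : N.NonInt a) (hb : N.NonInt b) (hc : N.NonInt c) :
    coeff (sgl a + sgl b + sgl c) (N.rhs k x * N.rhs k x') = 0 := by
  have happ : ∀ (w : σ) (m' : σ →₀ ℕ), m' + sgl w = sgl a + sgl b + sgl c → m' w + 1 =
      (sgl a + sgl b + sgl c) w := by
    intro w m' h
    have h2 := congrArg (fun mm => mm w) h
    simpa [Finsupp.add_apply, sgl_apply_self] using h2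
  have hUapp : ∀ (i' : N.ι) (j' : Fin (N.L i')) (m' : σ →₀ ℕ),
      ¬ m' + sgl (N.U i' ((j' : ℕ) + 1)) = sgl a + sgl b + sgl c := by
    intro i' j' m' h
    have h2 := happ _ _ h
    simp only [Finsupp.add_apply] at h2
    rw [sgl_apply_ne (Ne.symm (ha i' j')), sgl_apply_ne (Ne.symm (hb i' j')), sgl_apply_ne (Ne.symm (hc i' j'))] at h2
    omega
  rw [rhs_eq k x, rhs_eq k x', Finset.sum_mul_sum]
  simp only [Finset.sum_mul_sum, coeff_sum]
  refine Finset.sum_eq_zero fun i _ => Finset.sum_eq_zero fun i' _ => ?_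
  refine Finset.sum_eq_zero fun j _ => Finset.sum_eq_zero fun j' _ => ?_
  rw [C_mul_XX, C_mul_Xone, C_mul_XX, C_mul_Xone, add_mul, mul_add, mul_add,
    monomial_mul, monomial_mul, monomial_mul, monomial_mul,
    coeff_add, coeff_add, coeff_add, coeff_monomial, coeff_monomial, coeff_monomial,
    coeff_monomial,
    if_neg (show ¬ sgl (N.Y i) + sgl (N.S i (j : ℕ)) + (sgl (N.Y i') + sgl (N.S i' (j' : ℕ)))
        = sgl a + sgl b + sgl c from fun h => by have := congrArg mdeg h; simp at this),
    if_neg (hUapp i' j' _),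
    if_neg (show ¬ sgl (N.U i ((j : ℕ) + 1)) + (sgl (N.Y i') + sgl (N.S i' (j' : ℕ)))
        = sgl a + sgl b + sgl c from fun h => by
      rw [add_comm (sgl (N.U i ((j : ℕ) + 1))) (sgl (N.Y i') + sgl (N.S i' (j' : ℕ)))] at h
      exact hUapp i j _ h),
    if_neg (hUapp i' j' _)]
  norm_num

end NetAux2


section NetAux3
open scoped Classical

variable {N : A1Network σ}

lemma Y_ne_S {part : σ → ℕ} (hp : N.IsPartition part) (i : N.ι) (m : ℕ) (hm : m ≤ N.L i) :
    N.Y i ≠ N.S i m := by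
  obtain ⟨α, hα1, hSα, hYα, hY0⟩ := hp.2 i
  intro h
  exact hYα (by rw [h, hSα m hm])

lemma class_clash {part : σ → ℕ} (hp : N.IsPartition part) {i p : N.ι} {r r' j : ℕ}
    (hr : r ≤ N.L p) (hr' : r' ≤ N.L p) (hj : j ≤ N.L i)
    (hY : N.Y i = N.S p r) (hS : N.S i j = N.S p r') : False := by
  obtain ⟨α, hα1, hSα, hYα, hY0⟩ := hp.2 i
  obtain ⟨α', hα1', hSα', hYα', hY0'⟩ := hp.2 p
  apply hYα
  rw [hY, hSα' r hr, ← hSα' r' hr', ← hS, hSα j hj]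

lemma pair_match_unique (h1 : N.Assumption1) {part : σ → ℕ} (hp : N.IsPartition part)
    (p : N.ι) (r : ℕ) (hr : r ≤ N.L p) :
    ∀ (i : N.ι) (j : Fin (N.L i)),
      ((N.Y i = N.Y p ∧ N.S i (j : ℕ) = N.S p r) ∨
        (N.Y i = N.S p r ∧ N.S i (j : ℕ) = N.Y p)) → i = p ∧ (j : ℕ) = r := by
  intro i j hmatch
  rcases hmatch with ⟨hY, hS⟩ | ⟨hY, hS⟩
  · have hip : i = p := h1.complex_unique i p (j : ℕ) r (le_of_lt j.isLt) hr
      (fun w => by rw [hY, hS])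
    subst hip
    exact ⟨rfl, h1.S_inj i (j : ℕ) r (le_of_lt j.isLt) hr hS⟩
  · have hip : i = p := h1.complex_unique i p (j : ℕ) r (le_of_lt j.isLt) hr
      (fun w => by rw [hY, hS]; ring)
    subst hip
    exact absurd hY (Y_ne_S hp i r hr)

lemma pair_match_none {part : σ → ℕ} (hp : N.IsPartition part)
    (p : N.ι) (r r' : ℕ) (hr : r ≤ N.L p) (hr' : r' ≤ N.L p) :
    ∀ (i : N.ι) (j : Fin (N.L i)),
      ¬((N.Y i = N.S p r ∧ N.S i (j : ℕ) = N.S p r') ∨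
        (N.Y i = N.S p r' ∧ N.S i (j : ℕ) = N.S p r)) := by
  intro i j hmatch
  rcases hmatch with ⟨hY, hS⟩ | ⟨hY, hS⟩
  · exact class_clash hp hr hr' (le_of_lt j.isLt) hY hS
  · exact class_clash hp hr' hr (le_of_lt j.isLt) hY hS

lemma coeff_rhs_pair_YS (h1 : N.Assumption1) {part : σ → ℕ} (hp : N.IsPartition part)
    (k : N.Param → ℝ) (x : σ) (p : N.ι) (q : Fin (N.L p)) :
    coeff (sgl (N.Y p) + sgl (N.S p (q : ℕ))) (N.rhs k x) = N.AAc k x p q := by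
  rw [coeff_rhs_pair,
    sum_sum_eq_single _ p q (fun i j h => if_neg fun hm =>
      h (pair_match_unique h1 hp p (q : ℕ) (le_of_lt q.isLt) i j hm)),
    if_pos (Or.inl ⟨rfl, rfl⟩)]

lemma coeff_QQ_pair_YS (h1 : N.Assumption1) {part : σ → ℕ} (hp : N.IsPartition part)
    (k : N.Param → ℝ) (x : σ) (p : N.ι) (q : Fin (N.L p)) :
    coeff (sgl (N.Y p) + sgl (N.S p (q : ℕ))) (N.QQ k x) = N.BBc k x p q * k ⟨p, q, 0⟩ := by
  rw [coeff_QQ_pair h1 k x (Y_ne_S hp p (q : ℕ) (le_of_lt q.isLt)) (nonInt_Y h1 p)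
      (nonInt_S h1 p (q : ℕ) (le_of_lt q.isLt)),
    sum_sum_eq_single _ p q (fun i j h => if_neg fun hm =>
      h (pair_match_unique h1 hp p (q : ℕ) (le_of_lt q.isLt) i j hm)),
    if_pos (Or.inl ⟨rfl, rfl⟩)]

lemma coeff_rhs_pair_SS {part : σ → ℕ} (hp : N.IsPartition part)
    (k : N.Param → ℝ) (x : σ) (p : N.ι) (r r' : ℕ) (hr : r ≤ N.L p) (hr' : r' ≤ N.L p) :
    coeff (sgl (N.S p r) + sgl (N.S p r')) (N.rhs k x) = 0 := by
  rw [coeff_rhs_pair]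
  exact sum_sum_eq_zero _ fun i j => if_neg (pair_match_none hp p r r' hr hr' i j)

lemma coeff_QQ_pair_SS (h1 : N.Assumption1) {part : σ → ℕ} (hp : N.IsPartition part)
    (k : N.Param → ℝ) (x : σ) (p : N.ι) (r r' : ℕ) (hr : r ≤ N.L p) (hr' : r' ≤ N.L p)
    (hne : N.S p r ≠ N.S p r') :
    coeff (sgl (N.S p r) + sgl (N.S p r')) (N.QQ k x) = 0 := by
  rw [coeff_QQ_pair h1 k x hne (nonInt_S h1 p r hr) (nonInt_S h1 p r' hr')]
  exact sum_sum_eq_zero _ fun i j => if_neg (pair_match_none hp p r r' hr hr' i j)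

lemma QQ_def (k : N.Param → ℝ) (x : σ) : lieD (N.rhs k) (N.rhs k x) = N.QQ k x := rfl

lemma lieD_QQ_eq (k : N.Param → ℝ) (x : σ) :
    lieD (N.rhs k) (N.QQ k x) = ∑ i : N.ι, ∑ j : Fin (N.L i),
      (C (N.AAc k x i j) * (N.QQ k (N.Y i) * X (N.S i (j : ℕ))
          + N.rhs k (N.Y i) * N.rhs k (N.S i (j : ℕ)))
        + C (N.AAc k x i j) * (N.rhs k (N.Y i) * N.rhs k (N.S i (j : ℕ))
          + X (N.Y i) * N.QQ k (N.S i (j : ℕ)))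
        + C (N.BBc k x i j) * N.QQ k (N.U i ((j : ℕ) + 1))) := by
  conv_lhs => rw [QQ_eq]
  rw [lieD_sum]
  refine Finset.sum_congr rfl fun i _ => ?_
  rw [lieD_sum]
  refine Finset.sum_congr rfl fun j _ => ?_
  rw [lieD_add, lieD_C_mul, lieD_C_mul, lieD_add, lieD_mul, lieD_mul, lieD_X, lieD_X,
    QQ_def, QQ_def, QQ_def, mul_add (C (N.AAc k x i j)), add_assoc]

end NetAux3


section Main
open scoped Classical

variable {N : A1Network σ}

/-- Evaluation of `BBc` at the last product. -/
lemma BBc_sL (h1 : N.Assumption1) {part : σ → ℕ} (hp : N.IsPartition part)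
    (k : N.Param → ℝ) (i₀ : N.ι) (β₀ : Fin (N.L i₀)) (hβ : (β₀ : ℕ) = N.L i₀ - 1) :
    N.BBc k (N.S i₀ (N.L i₀)) i₀ β₀ = k ⟨i₀, β₀, 2⟩ := by
  have hLpos := N.Lpos i₀
  unfold BBc
  rw [ind_ne (Y_ne_S hp i₀ (N.L i₀) le_rfl),
    ind_ne (h1.U_ne_S i₀ β₀ i₀ (N.L i₀) le_rfl),
    ind_ne (show N.S i₀ (β₀ : ℕ) ≠ N.S i₀ (N.L i₀) from fun h => by
      have := h1.S_inj i₀ (β₀ : ℕ) (N.L i₀) (le_of_lt β₀.isLt) le_rfl h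
      omega),
    show (β₀ : ℕ) + 1 = N.L i₀ by omega, ind_self]
  ring

lemma AAc_sL (h1 : N.Assumption1) {part : σ → ℕ} (hp : N.IsPartition part)
    (k : N.Param → ℝ) (i₀ : N.ι) (β₀ : Fin (N.L i₀)) (hβ : (β₀ : ℕ) = N.L i₀ - 1) :
    N.AAc k (N.S i₀ (N.L i₀)) i₀ β₀ = 0 := by
  unfold AAc
  rw [ind_ne (Y_ne_S hp i₀ (N.L i₀) le_rfl),
    ind_ne (h1.U_ne_S i₀ β₀ i₀ (N.L i₀) le_rfl),
    ind_ne (show N.S i₀ (β₀ : ℕ) ≠ N.S i₀ (N.L i₀) from fun h => by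
      have hLpos := N.Lpos i₀
      have := h1.S_inj i₀ (β₀ : ℕ) (N.L i₀) (le_of_lt β₀.isLt) le_rfl h
      omega)]
  ring

/-- `ċ_L` : coefficient of `u_L` in the first derivative of `s_L`. -/
lemma coeff_D1_sglU (h1 : N.Assumption1) {part : σ → ℕ} (hp : N.IsPartition part)
    (k : N.Param → ℝ) (i₀ : N.ι) (β₀ : Fin (N.L i₀)) (hβ : (β₀ : ℕ) = N.L i₀ - 1) :
    coeff (sgl (N.U i₀ ((β₀ : ℕ) + 1))) (N.rhs k (N.S i₀ (N.L i₀))) = k ⟨i₀, β₀, 2⟩ := by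
  rw [coeff_rhs_sgl_U h1, BBc_sL h1 hp k i₀ β₀ hβ]

/-- coefficient of `u_L` in the second derivative of `s_L`. -/
lemma coeff_D2_sglU (h1 : N.Assumption1) {part : σ → ℕ} (hp : N.IsPartition part)
    (k : N.Param → ℝ) (i₀ : N.ι) (β₀ : Fin (N.L i₀)) (hβ : (β₀ : ℕ) = N.L i₀ - 1) :
    coeff (sgl (N.U i₀ ((β₀ : ℕ) + 1))) (N.QQ k (N.S i₀ (N.L i₀)))
      = -(k ⟨i₀, β₀, 2⟩ * (k ⟨i₀, β₀, 1⟩ + k ⟨i₀, β₀, 2⟩)) := by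
  rw [coeff_QQ_sgl_U h1, BBc_sL h1 hp k i₀ β₀ hβ]

/-- coefficient of `y·s_{L-1}` in the second derivative of `s_L`. -/
lemma coeff_D2_pair (h1 : N.Assumption1) {part : σ → ℕ} (hp : N.IsPartition part)
    (k : N.Param → ℝ) (i₀ : N.ι) (β₀ : Fin (N.L i₀)) (hβ : (β₀ : ℕ) = N.L i₀ - 1) :
    coeff (sgl (N.Y i₀) + sgl (N.S i₀ (β₀ : ℕ))) (N.QQ k (N.S i₀ (N.L i₀)))
      = k ⟨i₀, β₀, 2⟩ * k ⟨i₀, β₀, 0⟩ := by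
  rw [coeff_QQ_pair_YS h1 hp, BBc_sL h1 hp k i₀ β₀ hβ]

end Main


section M4
open scoped Classical

variable {N : A1Network σ}

lemma coeff_D3_m1 (h1 : N.Assumption1) {part : σ → ℕ} (hp : N.IsPartition part)
    (k : N.Param → ℝ) (i₀ : N.ι) (β₀ : Fin (N.L i₀)) (hβ : (β₀ : ℕ) = N.L i₀ - 1)
    (q : Fin (N.L i₀)) (hq : (q : ℕ) + 1 < N.L i₀) :
    coeff (sgl (N.U i₀ ((q : ℕ) + 1)) + sgl (N.S i₀ (β₀ : ℕ)))
      (lieD (N.rhs k) (N.QQ k (N.S i₀ (N.L i₀)))) =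
      (k ⟨i₀, q, 1⟩ + k ⟨i₀, q, 2⟩) * (k ⟨i₀, β₀, 2⟩ * k ⟨i₀, β₀, 0⟩) := by
  have hLpos := N.Lpos i₀
  have hut : N.U i₀ ((q : ℕ) + 1) ≠ N.S i₀ (β₀ : ℕ) :=
    h1.U_ne_S i₀ q i₀ (β₀ : ℕ) (le_of_lt β₀.isLt)
  have htni : N.NonInt (N.S i₀ (β₀ : ℕ)) := nonInt_S h1 i₀ (β₀ : ℕ) (le_of_lt β₀.isLt)
  have htsL : N.S i₀ (β₀ : ℕ) ≠ N.S i₀ (N.L i₀) := fun h => by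
    have := h1.S_inj i₀ (β₀ : ℕ) (N.L i₀) (le_of_lt β₀.isLt) le_rfl h; omega
  have hfut : ∀ w, coeff (sgl (N.U i₀ ((q : ℕ) + 1)) + sgl (N.S i₀ (β₀ : ℕ)))
      (N.rhs k w) = 0 := by
    intro w
    rw [coeff_rhs_pair]
    refine sum_sum_eq_zero _ fun i' j' => if_neg ?_
    rintro (⟨hY, hS⟩ | ⟨hY, hS⟩)
    · exact h1.U_ne_Y i₀ q i' hY.symm
    · exact h1.U_ne_S i₀ q i' (j' : ℕ) (le_of_lt j'.isLt) hS.symm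
  have hmul2 : ∀ w w', coeff (sgl (N.U i₀ ((q : ℕ) + 1)) + sgl (N.S i₀ (β₀ : ℕ)))
      (N.rhs k w * N.rhs k w') = 0 := fun w w' => coeff_rhs_mul_rhs_two k w w' htni
  have hQni : ∀ w, coeff (sgl (N.S i₀ (β₀ : ℕ))) (N.QQ k w) = 0 :=
    fun w => coeff_QQ_sgl_nonInt k w htni
  have hfni : ∀ w, coeff (sgl (N.S i₀ (β₀ : ℕ))) (N.rhs k w) = 0 :=
    fun w => coeff_rhs_sgl_nonInt k w htni
  have hQu : ∀ w, coeff (sgl (N.U i₀ ((q : ℕ) + 1))) (N.QQ k w)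
      = -(N.BBc k w i₀ q * (k ⟨i₀, q, 1⟩ + k ⟨i₀, q, 2⟩)) :=
    fun w => coeff_QQ_sgl_U h1 k w i₀ q
  have hfu : ∀ w, coeff (sgl (N.U i₀ ((q : ℕ) + 1))) (N.rhs k w) = N.BBc k w i₀ q :=
    fun w => coeff_rhs_sgl_U h1 k w i₀ q
  rw [lieD_QQ_eq]
  simp only [coeff_sum]
  have hexp : ∀ (i : N.ι) (j : Fin (N.L i)),
      coeff (sgl (N.U i₀ ((q : ℕ) + 1)) + sgl (N.S i₀ (β₀ : ℕ)))
        (C (N.AAc k (N.S i₀ (N.L i₀)) i j) * (N.QQ k (N.Y i) * X (N.S i (j : ℕ))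
            + N.rhs k (N.Y i) * N.rhs k (N.S i (j : ℕ)))
          + C (N.AAc k (N.S i₀ (N.L i₀)) i j) * (N.rhs k (N.Y i) * N.rhs k (N.S i (j : ℕ))
            + X (N.Y i) * N.QQ k (N.S i (j : ℕ)))
          + C (N.BBc k (N.S i₀ (N.L i₀)) i j) * N.QQ k (N.U i ((j : ℕ) + 1)))
      = ((if N.S i (j : ℕ) = N.S i₀ (β₀ : ℕ) then N.BBc k (N.Y i) i₀ q else 0)
          + (if N.Y i = N.S i₀ (β₀ : ℕ) then N.BBc k (N.S i (j : ℕ)) i₀ q else 0))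
        * (N.BBc k (N.S i₀ (N.L i₀)) i j * k ⟨i, j, 0⟩
          - N.AAc k (N.S i₀ (N.L i₀)) i j * (k ⟨i₀, q, 1⟩ + k ⟨i₀, q, 2⟩)) := by
    intro i j
    have hSu : ¬ N.S i (j : ℕ) = N.U i₀ ((q : ℕ) + 1) :=
      fun h => h1.U_ne_S i₀ q i (j : ℕ) (le_of_lt j.isLt) h.symm
    have hYu : ¬ N.Y i = N.U i₀ ((q : ℕ) + 1) :=
      fun h => h1.U_ne_Y i₀ q i h.symm
    rw [QQ_U_eq h1, mul_comm (X (N.Y i)) (N.QQ k (N.S i (j : ℕ))),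
      mul_comm (X (N.Y i)) (N.rhs k (N.S i (j : ℕ)))]
    simp only [coeff_add, coeff_sub, coeff_C_mul, coeff_mul_X_pair _ hut,
      hmul2, hfut, hQni, hfni, hQu, hfu, if_neg hSu, if_neg hYu]
    split_ifs <;> ring
  simp only [hexp]
  refine Eq.trans (sum_sum_eq_single _ i₀ β₀ ?_) ?_
  · -- vanishing away from the last block
    intro i j hij
    by_cases hst : N.S i (j : ℕ) = N.S i₀ (β₀ : ℕ)
    · by_cases hyy : N.Y i = N.Y i₀
      · exact absurd (pair_match_unique h1 hp i₀ (β₀ : ℕ) (le_of_lt β₀.isLt) i j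
          (Or.inl ⟨hyy, hst⟩)) hij
      · by_cases hyt : N.Y i = N.S i₀ (β₀ : ℕ)
        · have hA : N.AAc k (N.S i₀ (N.L i₀)) i j = 0 := by
            unfold AAc
            rw [ind_ne (h1.U_ne_S i j i₀ (N.L i₀) le_rfl),
              ind_ne (show N.Y i ≠ N.S i₀ (N.L i₀) from hyt ▸ htsL),
              ind_ne (show N.S i (j : ℕ) ≠ N.S i₀ (N.L i₀) from hst ▸ htsL)]
            ring
          have hB : N.BBc k (N.S i₀ (N.L i₀)) i j = 0 := by
            unfold BBc
            rw [ind_ne (h1.U_ne_S i j i₀ (N.L i₀) le_rfl),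
              ind_ne (show N.Y i ≠ N.S i₀ (N.L i₀) from hyt ▸ htsL),
              ind_ne (show N.S i (j : ℕ) ≠ N.S i₀ (N.L i₀) from hst ▸ htsL),
              ind_ne (show N.S i ((j : ℕ) + 1) ≠ N.S i₀ (N.L i₀) from fun h =>
                class_clash hp (le_of_lt β₀.isLt) le_rfl j.isLt hyt h)]
            ring
          rw [hA, hB]; ring
        · by_cases hσ : N.S i₀ (q : ℕ) = N.Y i ∨ N.S i₀ ((q : ℕ) + 1) = N.Y i
          · have hYnsL : N.Y i ≠ N.S i₀ (N.L i₀) := by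
              rcases hσ with h | h
              · rw [← h]; intro hh
                have := h1.S_inj i₀ (q : ℕ) (N.L i₀) (le_of_lt q.isLt) le_rfl hh; omega
              · rw [← h]; intro hh
                have := h1.S_inj i₀ ((q : ℕ) + 1) (N.L i₀) (le_of_lt hq) le_rfl hh; omega
            have hA : N.AAc k (N.S i₀ (N.L i₀)) i j = 0 := by
              unfold AAc
              rw [ind_ne (h1.U_ne_S i j i₀ (N.L i₀) le_rfl), ind_ne hYnsL,
                ind_ne (show N.S i (j : ℕ) ≠ N.S i₀ (N.L i₀) from hst ▸ htsL)]
              ring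
            have hB : N.BBc k (N.S i₀ (N.L i₀)) i j = 0 := by
              unfold BBc
              rw [ind_ne (h1.U_ne_S i j i₀ (N.L i₀) le_rfl), ind_ne hYnsL,
                ind_ne (show N.S i (j : ℕ) ≠ N.S i₀ (N.L i₀) from hst ▸ htsL),
                ind_ne (show N.S i ((j : ℕ) + 1) ≠ N.S i₀ (N.L i₀) from fun h =>
                  hσ.elim
                    (fun hh => class_clash hp (le_of_lt q.isLt) le_rfl j.isLt hh.symm h)
                    (fun hh => class_clash hp (le_of_lt hq) le_rfl j.isLt hh.symm h))]
              ring
            rw [hA, hB]; ring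
          · push_neg at hσ
            have hBY : N.BBc k (N.Y i) i₀ q = 0 := by
              unfold BBc
              rw [ind_ne (fun h : N.Y i₀ = N.Y i => hyy h.symm), ind_ne hσ.1, ind_ne hσ.2,
                ind_ne (h1.U_ne_Y i₀ q i)]
              ring
            rw [if_pos hst, if_neg hyt, hBY]
            ring
    · by_cases hyt : N.Y i = N.S i₀ (β₀ : ℕ)
      · by_cases hsy : N.S i (j : ℕ) = N.Y i₀
        · have hA : N.AAc k (N.S i₀ (N.L i₀)) i j = 0 := by
            unfold AAc
            rw [ind_ne (h1.U_ne_S i j i₀ (N.L i₀) le_rfl),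
              ind_ne (show N.Y i ≠ N.S i₀ (N.L i₀) from hyt ▸ htsL),
              ind_ne (show N.S i (j : ℕ) ≠ N.S i₀ (N.L i₀) from
                hsy ▸ Y_ne_S hp i₀ (N.L i₀) le_rfl)]
            ring
          have hB : N.BBc k (N.S i₀ (N.L i₀)) i j = 0 := by
            unfold BBc
            rw [ind_ne (h1.U_ne_S i j i₀ (N.L i₀) le_rfl),
              ind_ne (show N.Y i ≠ N.S i₀ (N.L i₀) from hyt ▸ htsL),
              ind_ne (show N.S i (j : ℕ) ≠ N.S i₀ (N.L i₀) from
                hsy ▸ Y_ne_S hp i₀ (N.L i₀) le_rfl),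
              ind_ne (show N.S i ((j : ℕ) + 1) ≠ N.S i₀ (N.L i₀) from fun h =>
                class_clash hp (le_of_lt β₀.isLt) le_rfl j.isLt hyt h)]
            ring
          rw [hA, hB]; ring
        · by_cases hσS : N.S i₀ (q : ℕ) = N.S i (j : ℕ) ∨ N.S i₀ ((q : ℕ) + 1) = N.S i (j : ℕ)
          · rcases hσS with h | h
            · exact (class_clash hp (le_of_lt β₀.isLt) (le_of_lt q.isLt)
                (le_of_lt j.isLt) hyt h.symm).elim
            · exact (class_clash hp (le_of_lt β₀.isLt) (le_of_lt hq)
                (le_of_lt j.isLt) hyt h.symm).elim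
          · push_neg at hσS
            have hBS : N.BBc k (N.S i (j : ℕ)) i₀ q = 0 := by
              unfold BBc
              rw [ind_ne (fun h : N.Y i₀ = N.S i (j : ℕ) => hsy h.symm),
                ind_ne hσS.1, ind_ne hσS.2,
                ind_ne (h1.U_ne_S i₀ q i (j : ℕ) (le_of_lt j.isLt))]
              ring
            rw [if_neg hst, if_pos hyt, hBS]
            ring
      · rw [if_neg hst, if_neg hyt]
        ring
  · -- value at the last block
    have hty : ¬ N.Y i₀ = N.S i₀ (β₀ : ℕ) := Y_ne_S hp i₀ (β₀ : ℕ) (le_of_lt β₀.isLt)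
    have hBBy : N.BBc k (N.Y i₀) i₀ q = k ⟨i₀, q, 1⟩ + k ⟨i₀, q, 2⟩ := by
      unfold BBc
      rw [ind_self, ind_ne (Ne.symm (Y_ne_S hp i₀ (q : ℕ) (le_of_lt q.isLt))),
        ind_ne (Ne.symm (Y_ne_S hp i₀ ((q : ℕ) + 1) (le_of_lt hq))),
        ind_ne (h1.U_ne_Y i₀ q i₀)]
      ring
    rw [if_pos rfl, if_neg hty, BBc_sL h1 hp k i₀ β₀ hβ, AAc_sL h1 hp k i₀ β₀ hβ, hBBy]
    ring

end M4


section M5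
open scoped Classical

variable {N : A1Network σ}

lemma coeff_D3_m2 (h1 : N.Assumption1) {part : σ → ℕ} (hp : N.IsPartition part)
    (k : N.Param → ℝ) (i₀ : N.ι) (β₀ : Fin (N.L i₀)) (hβ : (β₀ : ℕ) = N.L i₀ - 1)
    (q : Fin (N.L i₀)) (hq : (q : ℕ) + 1 < N.L i₀) :
    coeff (sgl (N.Y i₀) + sgl (N.S i₀ (q : ℕ)) + sgl (N.S i₀ (β₀ : ℕ)))
      (lieD (N.rhs k) (N.QQ k (N.S i₀ (N.L i₀)))) =
      -(k ⟨i₀, q, 0⟩ * (k ⟨i₀, β₀, 2⟩ * k ⟨i₀, β₀, 0⟩)) := by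
  have hLpos := N.Lpos i₀
  have hβ1 : (β₀ : ℕ) + 1 ≤ N.L i₀ := β₀.isLt
  have hqβ : (q : ℕ) ≠ (β₀ : ℕ) := by omega
  have htni : N.NonInt (N.S i₀ (β₀ : ℕ)) := nonInt_S h1 i₀ (β₀ : ℕ) (le_of_lt β₀.isLt)
  have hσni : N.NonInt (N.S i₀ (q : ℕ)) := nonInt_S h1 i₀ (q : ℕ) (le_of_lt q.isLt)
  have hyni : N.NonInt (N.Y i₀) := nonInt_Y h1 i₀
  have hσ₁t : N.S i₀ (q : ℕ) ≠ N.S i₀ (β₀ : ℕ) := fun h =>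
    hqβ (h1.S_inj i₀ (q : ℕ) (β₀ : ℕ) (le_of_lt q.isLt) (le_of_lt β₀.isLt) h)
  have hσ₁sL : N.S i₀ (q : ℕ) ≠ N.S i₀ (N.L i₀) := fun h => by
    have := h1.S_inj i₀ (q : ℕ) (N.L i₀) (le_of_lt q.isLt) le_rfl h; omega
  have hσ₂sL : N.S i₀ ((q : ℕ) + 1) ≠ N.S i₀ (N.L i₀) := fun h => by
    have := h1.S_inj i₀ ((q : ℕ) + 1) (N.L i₀) (le_of_lt hq) le_rfl h; omega
  have htsL : N.S i₀ (β₀ : ℕ) ≠ N.S i₀ (N.L i₀) := fun h => by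
    have := h1.S_inj i₀ (β₀ : ℕ) (N.L i₀) (le_of_lt β₀.isLt) le_rfl h; omega
  -- pair coefficient values
  have hQσt : ∀ w, coeff (sgl (N.S i₀ (q : ℕ)) + sgl (N.S i₀ (β₀ : ℕ))) (N.QQ k w) = 0 :=
    fun w => coeff_QQ_pair_SS h1 hp k w i₀ (q : ℕ) (β₀ : ℕ) (le_of_lt q.isLt)
      (le_of_lt β₀.isLt) hσ₁t
  have hfσt : ∀ w, coeff (sgl (N.S i₀ (q : ℕ)) + sgl (N.S i₀ (β₀ : ℕ))) (N.rhs k w) = 0 :=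
    fun w => coeff_rhs_pair_SS hp k w i₀ (q : ℕ) (β₀ : ℕ) (le_of_lt q.isLt)
      (le_of_lt β₀.isLt)
  have hQyt : ∀ w, coeff (sgl (N.Y i₀) + sgl (N.S i₀ (β₀ : ℕ))) (N.QQ k w)
      = N.BBc k w i₀ β₀ * k ⟨i₀, β₀, 0⟩ := fun w => coeff_QQ_pair_YS h1 hp k w i₀ β₀
  have hfyt : ∀ w, coeff (sgl (N.Y i₀) + sgl (N.S i₀ (β₀ : ℕ))) (N.rhs k w)
      = N.AAc k w i₀ β₀ := fun w => coeff_rhs_pair_YS h1 hp k w i₀ β₀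
  have hQyσ : ∀ w, coeff (sgl (N.Y i₀) + sgl (N.S i₀ (q : ℕ))) (N.QQ k w)
      = N.BBc k w i₀ q * k ⟨i₀, q, 0⟩ := fun w => coeff_QQ_pair_YS h1 hp k w i₀ q
  have hfyσ : ∀ w, coeff (sgl (N.Y i₀) + sgl (N.S i₀ (q : ℕ))) (N.rhs k w)
      = N.AAc k w i₀ q := fun w => coeff_rhs_pair_YS h1 hp k w i₀ q
  have hmul3 : ∀ w w', coeff (sgl (N.Y i₀) + sgl (N.S i₀ (q : ℕ)) + sgl (N.S i₀ (β₀ : ℕ)))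
      (N.rhs k w * N.rhs k w') = 0 :=
    fun w w' => coeff_rhs_mul_rhs_three k w w' hyni hσni htni
  have hfm2 : ∀ w, coeff (sgl (N.Y i₀) + sgl (N.S i₀ (q : ℕ)) + sgl (N.S i₀ (β₀ : ℕ)))
      (N.rhs k w) = 0 := fun w => coeff_rhs_mdeg k w (by simp) (by simp)
  rw [lieD_QQ_eq]
  simp only [coeff_sum]
  have hexp : ∀ (i : N.ι) (j : Fin (N.L i)),
      coeff (sgl (N.Y i₀) + sgl (N.S i₀ (q : ℕ)) + sgl (N.S i₀ (β₀ : ℕ)))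
        (C (N.AAc k (N.S i₀ (N.L i₀)) i j) * (N.QQ k (N.Y i) * X (N.S i (j : ℕ))
            + N.rhs k (N.Y i) * N.rhs k (N.S i (j : ℕ)))
          + C (N.AAc k (N.S i₀ (N.L i₀)) i j) * (N.rhs k (N.Y i) * N.rhs k (N.S i (j : ℕ))
            + X (N.Y i) * N.QQ k (N.S i (j : ℕ)))
          + C (N.BBc k (N.S i₀ (N.L i₀)) i j) * N.QQ k (N.U i ((j : ℕ) + 1)))
      = N.AAc k (N.S i₀ (N.L i₀)) i j *
          ((if N.S i (j : ℕ) = N.Y i₀ then 0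
            else if N.S i (j : ℕ) = N.S i₀ (q : ℕ) then N.BBc k (N.Y i) i₀ β₀ * k ⟨i₀, β₀, 0⟩
            else if N.S i (j : ℕ) = N.S i₀ (β₀ : ℕ) then N.BBc k (N.Y i) i₀ q * k ⟨i₀, q, 0⟩
            else 0)
           + (if N.Y i = N.Y i₀ then 0
            else if N.Y i = N.S i₀ (q : ℕ) then N.BBc k (N.S i (j : ℕ)) i₀ β₀ * k ⟨i₀, β₀, 0⟩
            else if N.Y i = N.S i₀ (β₀ : ℕ) then N.BBc k (N.S i (j : ℕ)) i₀ q * k ⟨i₀, q, 0⟩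
            else 0))
        + N.BBc k (N.S i₀ (N.L i₀)) i j * (k ⟨i, j, 0⟩ *
          ((if N.S i (j : ℕ) = N.Y i₀ then 0
            else if N.S i (j : ℕ) = N.S i₀ (q : ℕ) then N.AAc k (N.Y i) i₀ β₀
            else if N.S i (j : ℕ) = N.S i₀ (β₀ : ℕ) then N.AAc k (N.Y i) i₀ q
            else 0)
           + (if N.Y i = N.Y i₀ then 0
            else if N.Y i = N.S i₀ (q : ℕ) then N.AAc k (N.S i (j : ℕ)) i₀ β₀
            else if N.Y i = N.S i₀ (β₀ : ℕ) then N.AAc k (N.S i (j : ℕ)) i₀ q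
            else 0))) := by
    intro i j
    rw [QQ_U_eq h1, mul_comm (X (N.Y i)) (N.QQ k (N.S i (j : ℕ))),
      mul_comm (X (N.Y i)) (N.rhs k (N.S i (j : ℕ)))]
    simp only [coeff_add, coeff_sub, coeff_C_mul, coeff_mul_X_triple,
      triple_sub_left, triple_sub_mid, triple_sub_right,
      hmul3, hfm2, hQσt, hfσt, hQyt, hfyt, hQyσ, hfyσ]
    ring
  simp only [hexp]
  refine Eq.trans (sum_sum_eq_single _ i₀ β₀ ?_) ?_
  · intro i j hij
    by_cases hsy : N.S i (j : ℕ) = N.Y i₀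
    · by_cases hyy : N.Y i = N.Y i₀
      · simp only [if_pos hsy, if_pos hyy]; ring
      · by_cases hyσ : N.Y i = N.S i₀ (q : ℕ)
        · have hA : N.AAc k (N.S i₀ (N.L i₀)) i j = 0 := by
            unfold AAc
            rw [ind_ne (h1.U_ne_S i j i₀ (N.L i₀) le_rfl),
              ind_ne (show N.Y i ≠ N.S i₀ (N.L i₀) by rw [hyσ]; exact hσ₁sL),
              ind_ne (show N.S i (j : ℕ) ≠ N.S i₀ (N.L i₀) by
                rw [hsy]; exact Y_ne_S hp i₀ (N.L i₀) le_rfl)]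
            ring
          have hB : N.BBc k (N.S i₀ (N.L i₀)) i j = 0 := by
            unfold BBc
            rw [ind_ne (h1.U_ne_S i j i₀ (N.L i₀) le_rfl),
              ind_ne (show N.Y i ≠ N.S i₀ (N.L i₀) by rw [hyσ]; exact hσ₁sL),
              ind_ne (show N.S i (j : ℕ) ≠ N.S i₀ (N.L i₀) by
                rw [hsy]; exact Y_ne_S hp i₀ (N.L i₀) le_rfl),
              ind_ne (show N.S i ((j : ℕ) + 1) ≠ N.S i₀ (N.L i₀) from fun h =>
                class_clash hp (le_of_lt q.isLt) le_rfl j.isLt hyσ h)]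
            ring
          rw [hA, hB]; ring
        · by_cases hyt : N.Y i = N.S i₀ (β₀ : ℕ)
          · have hA : N.AAc k (N.S i₀ (N.L i₀)) i j = 0 := by
              unfold AAc
              rw [ind_ne (h1.U_ne_S i j i₀ (N.L i₀) le_rfl),
                ind_ne (show N.Y i ≠ N.S i₀ (N.L i₀) by rw [hyt]; exact htsL),
                ind_ne (show N.S i (j : ℕ) ≠ N.S i₀ (N.L i₀) by
                  rw [hsy]; exact Y_ne_S hp i₀ (N.L i₀) le_rfl)]
              ring
            have hB : N.BBc k (N.S i₀ (N.L i₀)) i j = 0 := by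
              unfold BBc
              rw [ind_ne (h1.U_ne_S i j i₀ (N.L i₀) le_rfl),
                ind_ne (show N.Y i ≠ N.S i₀ (N.L i₀) by rw [hyt]; exact htsL),
                ind_ne (show N.S i (j : ℕ) ≠ N.S i₀ (N.L i₀) by
                  rw [hsy]; exact Y_ne_S hp i₀ (N.L i₀) le_rfl),
                ind_ne (show N.S i ((j : ℕ) + 1) ≠ N.S i₀ (N.L i₀) from fun h =>
                  class_clash hp (le_of_lt β₀.isLt) le_rfl j.isLt hyt h)]
              ring
            rw [hA, hB]; ring
          · simp only [if_pos hsy, if_neg hyy, if_neg hyσ, if_neg hyt]; ring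
    · by_cases hsσ : N.S i (j : ℕ) = N.S i₀ (q : ℕ)
      · by_cases hyy : N.Y i = N.Y i₀
        · obtain ⟨hii, hjj⟩ := pair_match_unique h1 hp i₀ (q : ℕ) (le_of_lt q.isLt) i j
            (Or.inl ⟨hyy, hsσ⟩)
          have hA : N.AAc k (N.S i₀ (N.L i₀)) i j = 0 := by
            unfold AAc
            rw [ind_ne (h1.U_ne_S i j i₀ (N.L i₀) le_rfl),
              ind_ne (show N.Y i ≠ N.S i₀ (N.L i₀) by
                rw [hyy]; exact Y_ne_S hp i₀ (N.L i₀) le_rfl),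
              ind_ne (show N.S i (j : ℕ) ≠ N.S i₀ (N.L i₀) by rw [hsσ]; exact hσ₁sL)]
            ring
          have hB : N.BBc k (N.S i₀ (N.L i₀)) i j = 0 := by
            unfold BBc
            rw [ind_ne (h1.U_ne_S i j i₀ (N.L i₀) le_rfl),
              ind_ne (show N.Y i ≠ N.S i₀ (N.L i₀) by
                rw [hyy]; exact Y_ne_S hp i₀ (N.L i₀) le_rfl),
              ind_ne (show N.S i (j : ℕ) ≠ N.S i₀ (N.L i₀) by rw [hsσ]; exact hσ₁sL),
              ind_ne (show N.S i ((j : ℕ) + 1) ≠ N.S i₀ (N.L i₀) by rw [hjj, hii]; exact hσ₂sL)]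
            ring
          rw [hA, hB]; ring
        · have hBYβ : N.BBc k (N.Y i) i₀ β₀ = 0 := by
            unfold BBc
            rw [ind_ne (fun h : N.Y i₀ = N.Y i => hyy h.symm),
              ind_ne (show N.S i₀ (β₀ : ℕ) ≠ N.Y i from fun h =>
                class_clash hp (le_of_lt β₀.isLt) (le_of_lt q.isLt) (le_of_lt j.isLt)
                  h.symm hsσ),
              ind_ne (show N.S i₀ ((β₀ : ℕ) + 1) ≠ N.Y i from fun h =>
                class_clash hp hβ1 (le_of_lt q.isLt) (le_of_lt j.isLt) h.symm hsσ),
              ind_ne (h1.U_ne_Y i₀ β₀ i)]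
            ring
          have hAYβ : N.AAc k (N.Y i) i₀ β₀ = 0 := by
            unfold AAc
            rw [ind_ne (fun h : N.Y i₀ = N.Y i => hyy h.symm),
              ind_ne (show N.S i₀ (β₀ : ℕ) ≠ N.Y i from fun h =>
                class_clash hp (le_of_lt β₀.isLt) (le_of_lt q.isLt) (le_of_lt j.isLt)
                  h.symm hsσ),
              ind_ne (h1.U_ne_Y i₀ β₀ i)]
            ring
          have hyσ : ¬ N.Y i = N.S i₀ (q : ℕ) := fun h =>
            class_clash hp (le_of_lt q.isLt) (le_of_lt q.isLt) (le_of_lt j.isLt) h hsσ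
          have hyt : ¬ N.Y i = N.S i₀ (β₀ : ℕ) := fun h =>
            class_clash hp (le_of_lt β₀.isLt) (le_of_lt q.isLt) (le_of_lt j.isLt) h hsσ
          simp only [if_neg hsy, if_pos hsσ, if_neg hyy, if_neg hyσ, if_neg hyt, hBYβ, hAYβ]
          ring
      · by_cases hst : N.S i (j : ℕ) = N.S i₀ (β₀ : ℕ)
        · by_cases hyy : N.Y i = N.Y i₀
          · exact absurd (pair_match_unique h1 hp i₀ (β₀ : ℕ) (le_of_lt β₀.isLt) i j
              (Or.inl ⟨hyy, hst⟩)) hij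
          · have hBYq : N.BBc k (N.Y i) i₀ q = 0 := by
              unfold BBc
              rw [ind_ne (fun h : N.Y i₀ = N.Y i => hyy h.symm),
                ind_ne (show N.S i₀ (q : ℕ) ≠ N.Y i from fun h =>
                  class_clash hp (le_of_lt q.isLt) (le_of_lt β₀.isLt) (le_of_lt j.isLt)
                    h.symm hst),
                ind_ne (show N.S i₀ ((q : ℕ) + 1) ≠ N.Y i from fun h =>
                  class_clash hp (le_of_lt hq) (le_of_lt β₀.isLt) (le_of_lt j.isLt)
                    h.symm hst),
                ind_ne (h1.U_ne_Y i₀ q i)]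
              ring
            have hAYq : N.AAc k (N.Y i) i₀ q = 0 := by
              unfold AAc
              rw [ind_ne (fun h : N.Y i₀ = N.Y i => hyy h.symm),
                ind_ne (show N.S i₀ (q : ℕ) ≠ N.Y i from fun h =>
                  class_clash hp (le_of_lt q.isLt) (le_of_lt β₀.isLt) (le_of_lt j.isLt)
                    h.symm hst),
                ind_ne (h1.U_ne_Y i₀ q i)]
              ring
            have hyσ : ¬ N.Y i = N.S i₀ (q : ℕ) := fun h =>
              class_clash hp (le_of_lt q.isLt) (le_of_lt β₀.isLt) (le_of_lt j.isLt) h hst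
            have hyt : ¬ N.Y i = N.S i₀ (β₀ : ℕ) := fun h =>
              class_clash hp (le_of_lt β₀.isLt) (le_of_lt β₀.isLt) (le_of_lt j.isLt) h hst
            simp only [if_neg hsy, if_neg hsσ, if_pos hst, if_neg hyy, if_neg hyσ,
              if_neg hyt, hBYq, hAYq]
            ring
        · by_cases hyσ : N.Y i = N.S i₀ (q : ℕ)
          · have hBSβ : N.BBc k (N.S i (j : ℕ)) i₀ β₀ = 0 := by
              unfold BBc
              rw [ind_ne (fun h : N.Y i₀ = N.S i (j : ℕ) => hsy h.symm),
                ind_ne (fun h : N.S i₀ (β₀ : ℕ) = N.S i (j : ℕ) => hst h.symm),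
                ind_ne (show N.S i₀ ((β₀ : ℕ) + 1) ≠ N.S i (j : ℕ) from fun h =>
                  class_clash hp (le_of_lt q.isLt) hβ1 (le_of_lt j.isLt) hyσ h.symm),
                ind_ne (h1.U_ne_S i₀ β₀ i (j : ℕ) (le_of_lt j.isLt))]
              ring
            have hASβ : N.AAc k (N.S i (j : ℕ)) i₀ β₀ = 0 := by
              unfold AAc
              rw [ind_ne (fun h : N.Y i₀ = N.S i (j : ℕ) => hsy h.symm),
                ind_ne (fun h : N.S i₀ (β₀ : ℕ) = N.S i (j : ℕ) => hst h.symm),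
                ind_ne (h1.U_ne_S i₀ β₀ i (j : ℕ) (le_of_lt j.isLt))]
              ring
            have hyy : ¬ N.Y i = N.Y i₀ := fun h =>
              (Y_ne_S hp i₀ (q : ℕ) (le_of_lt q.isLt)) (by rw [← h]; exact hyσ)
            simp only [if_neg hsy, if_neg hsσ, if_neg hst, if_neg hyy, if_pos hyσ,
              hBSβ, hASβ]
            ring
          · by_cases hyt : N.Y i = N.S i₀ (β₀ : ℕ)
            · have hBSq : N.BBc k (N.S i (j : ℕ)) i₀ q = 0 := by
                unfold BBc
                rw [ind_ne (fun h : N.Y i₀ = N.S i (j : ℕ) => hsy h.symm),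
                  ind_ne (fun h : N.S i₀ (q : ℕ) = N.S i (j : ℕ) => hsσ h.symm),
                  ind_ne (show N.S i₀ ((q : ℕ) + 1) ≠ N.S i (j : ℕ) from fun h =>
                    class_clash hp (le_of_lt β₀.isLt) (le_of_lt hq) (le_of_lt j.isLt)
                      hyt h.symm),
                  ind_ne (h1.U_ne_S i₀ q i (j : ℕ) (le_of_lt j.isLt))]
                ring
              have hASq : N.AAc k (N.S i (j : ℕ)) i₀ q = 0 := by
                unfold AAc
                rw [ind_ne (fun h : N.Y i₀ = N.S i (j : ℕ) => hsy h.symm),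
                  ind_ne (fun h : N.S i₀ (q : ℕ) = N.S i (j : ℕ) => hsσ h.symm),
                  ind_ne (h1.U_ne_S i₀ q i (j : ℕ) (le_of_lt j.isLt))]
                ring
              have hyy : ¬ N.Y i = N.Y i₀ := fun h =>
                (Y_ne_S hp i₀ (β₀ : ℕ) (le_of_lt β₀.isLt)) (by rw [← h]; exact hyt)
              simp only [if_neg hsy, if_neg hsσ, if_neg hst, if_neg hyy, if_neg hyσ,
                if_pos hyt, hBSq, hASq]
              ring
            · by_cases hyy : N.Y i = N.Y i₀
              · simp only [if_neg hsy, if_neg hsσ, if_neg hst, if_pos hyy]; ring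
              · simp only [if_neg hsy, if_neg hsσ, if_neg hst, if_neg hyy, if_neg hyσ,
                  if_neg hyt]; ring
  · -- value at the last block
    have h1sy : ¬ N.S i₀ (β₀ : ℕ) = N.Y i₀ :=
      fun h => (Y_ne_S hp i₀ (β₀ : ℕ) (le_of_lt β₀.isLt)) h.symm
    have h1sσ : ¬ N.S i₀ (β₀ : ℕ) = N.S i₀ (q : ℕ) := fun h => hσ₁t h.symm
    have hAy : N.AAc k (N.Y i₀) i₀ q = -(k ⟨i₀, q, 0⟩) := by
      unfold AAc
      rw [ind_ne (h1.U_ne_Y i₀ q i₀), ind_self,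
        ind_ne (Ne.symm (Y_ne_S hp i₀ (q : ℕ) (le_of_lt q.isLt)))]
      ring
    rw [if_neg h1sy, if_neg h1sσ, if_pos rfl, if_pos rfl,
      BBc_sL h1 hp k i₀ β₀ hβ, AAc_sL h1 hp k i₀ β₀ hβ, hAy,
      if_neg h1sy, if_neg h1sσ, if_pos rfl, if_pos rfl]
    ring

end M5


/-- **Lemma.** For a fixed connected component `i₀` of a network satisfying Assumptions 1
and 2: the constants `a_L, b_L, c_L` can be identified from `ṡ_L` and `s̈_L` (two
derivatives of the last product suffice); moreover, if `L > 1`, the constants `a_j` and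
`K_j = b_j + c_j`, for `1 ≤ j ≤ L-1`, can be identified from `ṡ_L, s̈_L, s_L^{(3)}`
(three derivatives suffice). Blocks are `0`-indexed: the paper's block `j` is `j-1`. -/
theorem last_block_and_aK_identifiable
    (N : A1Network σ) (h1 : N.Assumption1) (h2 : N.Assumption2) (i₀ : N.ι) :
    N.IdentifiableFrom
      (fun k =>
        (k ⟨i₀, ⟨N.L i₀ - 1, by have := N.Lpos i₀; omega⟩, 0⟩,
         k ⟨i₀, ⟨N.L i₀ - 1, by have := N.Lpos i₀; omega⟩, 1⟩,
         k ⟨i₀, ⟨N.L i₀ - 1, by have := N.Lpos i₀; omega⟩, 2⟩))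
      {N.S i₀ (N.L i₀)} 2
    ∧ (1 < N.L i₀ →
        N.IdentifiableFrom
          (fun k => fun j : Fin (N.L i₀ - 1) =>
            (k ⟨i₀, ⟨(j : ℕ), by have := j.isLt; omega⟩, 0⟩,
             k ⟨i₀, ⟨(j : ℕ), by have := j.isLt; omega⟩, 1⟩ +
               k ⟨i₀, ⟨(j : ℕ), by have := j.isLt; omega⟩, 2⟩))
          {N.S i₀ (N.L i₀)} 3) := by
  obtain ⟨part, hp⟩ := h2
  have hLpos := N.Lpos i₀
  set β₀ : Fin (N.L i₀) := ⟨N.L i₀ - 1, by omega⟩ with hβ₀def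
  have hβ : (β₀ : ℕ) = N.L i₀ - 1 := rfl
  have hder1 : ∀ k : N.Param → ℝ,
      N.deriv k 1 (N.S i₀ (N.L i₀)) = N.rhs k (N.S i₀ (N.L i₀)) := by
    intro k
    show lieD (N.rhs k) (lieDIter (N.rhs k) 0 (X (N.S i₀ (N.L i₀)))) = _
    rw [show lieDIter (N.rhs k) 0 (X (N.S i₀ (N.L i₀))) = X (N.S i₀ (N.L i₀)) from rfl,
      lieD_X]
  have hder2 : ∀ k : N.Param → ℝ,
      N.deriv k 2 (N.S i₀ (N.L i₀)) = N.QQ k (N.S i₀ (N.L i₀)) := by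
    intro k
    show lieD (N.rhs k) (lieDIter (N.rhs k) 1 (X (N.S i₀ (N.L i₀)))) = _
    rw [show lieDIter (N.rhs k) 1 (X (N.S i₀ (N.L i₀))) = N.deriv k 1 (N.S i₀ (N.L i₀))
        from rfl, hder1 k]
    rfl
  have hder3 : ∀ k : N.Param → ℝ,
      N.deriv k 3 (N.S i₀ (N.L i₀)) = lieD (N.rhs k) (N.QQ k (N.S i₀ (N.L i₀))) := by
    intro k
    show lieD (N.rhs k) (lieDIter (N.rhs k) 2 (X (N.S i₀ (N.L i₀)))) = _
    rw [show lieDIter (N.rhs k) 2 (X (N.S i₀ (N.L i₀))) = N.deriv k 2 (N.S i₀ (N.L i₀))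
        from rfl, hder2 k]
  constructor
  · intro k₁ k₂ hk₁ hk₂ hder
    have e1 : N.rhs k₁ (N.S i₀ (N.L i₀)) = N.rhs k₂ (N.S i₀ (N.L i₀)) := by
      rw [← hder1 k₁, ← hder1 k₂]
      exact hder _ (Set.mem_singleton _) 1 le_rfl (by norm_num)
    have e2 : N.QQ k₁ (N.S i₀ (N.L i₀)) = N.QQ k₂ (N.S i₀ (N.L i₀)) := by
      rw [← hder2 k₁, ← hder2 k₂]
      exact hder _ (Set.mem_singleton _) 2 (by norm_num) le_rfl
    have hc : k₁ ⟨i₀, β₀, 2⟩ = k₂ ⟨i₀, β₀, 2⟩ := by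
      have h := congrArg (coeff (sgl (N.U i₀ ((β₀ : ℕ) + 1)))) e1
      rwa [coeff_D1_sglU h1 hp k₁ i₀ β₀ hβ, coeff_D1_sglU h1 hp k₂ i₀ β₀ hβ] at h
    have hcpos : (0 : ℝ) < k₂ ⟨i₀, β₀, 2⟩ := hk₂ _
    have hK : k₁ ⟨i₀, β₀, 1⟩ + k₁ ⟨i₀, β₀, 2⟩ = k₂ ⟨i₀, β₀, 1⟩ + k₂ ⟨i₀, β₀, 2⟩ := by
      have h := congrArg (coeff (sgl (N.U i₀ ((β₀ : ℕ) + 1)))) e2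
      rw [coeff_D2_sglU h1 hp k₁ i₀ β₀ hβ, coeff_D2_sglU h1 hp k₂ i₀ β₀ hβ, neg_inj,
        hc] at h
      have h2 := mul_left_cancel₀ (ne_of_gt hcpos) h
      linarith
    have hb : k₁ ⟨i₀, β₀, 1⟩ = k₂ ⟨i₀, β₀, 1⟩ := by linarith
    have ha : k₁ ⟨i₀, β₀, 0⟩ = k₂ ⟨i₀, β₀, 0⟩ := by
      have h := congrArg (coeff (sgl (N.Y i₀) + sgl (N.S i₀ (β₀ : ℕ)))) e2
      rw [coeff_D2_pair h1 hp k₁ i₀ β₀ hβ, coeff_D2_pair h1 hp k₂ i₀ β₀ hβ, hc] at h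
      exact mul_left_cancel₀ (ne_of_gt hcpos) h
    show (k₁ ⟨i₀, β₀, 0⟩, k₁ ⟨i₀, β₀, 1⟩, k₁ ⟨i₀, β₀, 2⟩)
      = (k₂ ⟨i₀, β₀, 0⟩, k₂ ⟨i₀, β₀, 1⟩, k₂ ⟨i₀, β₀, 2⟩)
    rw [ha, hb, hc]
  · intro hL k₁ k₂ hk₁ hk₂ hder
    have e1 : N.rhs k₁ (N.S i₀ (N.L i₀)) = N.rhs k₂ (N.S i₀ (N.L i₀)) := by
      rw [← hder1 k₁, ← hder1 k₂]
      exact hder _ (Set.mem_singleton _) 1 le_rfl (by norm_num)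
    have e2 : N.QQ k₁ (N.S i₀ (N.L i₀)) = N.QQ k₂ (N.S i₀ (N.L i₀)) := by
      rw [← hder2 k₁, ← hder2 k₂]
      exact hder _ (Set.mem_singleton _) 2 (by norm_num) (by norm_num)
    have e3 : lieD (N.rhs k₁) (N.QQ k₁ (N.S i₀ (N.L i₀)))
        = lieD (N.rhs k₂) (N.QQ k₂ (N.S i₀ (N.L i₀))) := by
      rw [← hder3 k₁, ← hder3 k₂]
      exact hder _ (Set.mem_singleton _) 3 (by norm_num) le_rfl
    have hc : k₁ ⟨i₀, β₀, 2⟩ = k₂ ⟨i₀, β₀, 2⟩ := by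
      have h := congrArg (coeff (sgl (N.U i₀ ((β₀ : ℕ) + 1)))) e1
      rwa [coeff_D1_sglU h1 hp k₁ i₀ β₀ hβ, coeff_D1_sglU h1 hp k₂ i₀ β₀ hβ] at h
    have hcpos : (0 : ℝ) < k₂ ⟨i₀, β₀, 2⟩ := hk₂ _
    have ha : k₁ ⟨i₀, β₀, 0⟩ = k₂ ⟨i₀, β₀, 0⟩ := by
      have h := congrArg (coeff (sgl (N.Y i₀) + sgl (N.S i₀ (β₀ : ℕ)))) e2
      rw [coeff_D2_pair h1 hp k₁ i₀ β₀ hβ, coeff_D2_pair h1 hp k₂ i₀ β₀ hβ, hc] at h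
      exact mul_left_cancel₀ (ne_of_gt hcpos) h
    have hprodpos : (0 : ℝ) < k₂ ⟨i₀, β₀, 2⟩ * k₂ ⟨i₀, β₀, 0⟩ :=
      mul_pos (hk₂ _) (hk₂ _)
    funext jf
    have hjq : (jf : ℕ) + 1 < N.L i₀ := by have := jf.isLt; omega
    set qF : Fin (N.L i₀) := ⟨(jf : ℕ), by omega⟩ with hqFdef
    have hq2 : (qF : ℕ) + 1 < N.L i₀ := hjq
    have hK : k₁ ⟨i₀, qF, 1⟩ + k₁ ⟨i₀, qF, 2⟩ = k₂ ⟨i₀, qF, 1⟩ + k₂ ⟨i₀, qF, 2⟩ := by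
      have h := congrArg (coeff (sgl (N.U i₀ ((qF : ℕ) + 1)) + sgl (N.S i₀ (β₀ : ℕ)))) e3
      rw [coeff_D3_m1 h1 hp k₁ i₀ β₀ hβ qF hq2, coeff_D3_m1 h1 hp k₂ i₀ β₀ hβ qF hq2,
        hc, ha] at h
      exact mul_right_cancel₀ (ne_of_gt hprodpos) h
    have haq : k₁ ⟨i₀, qF, 0⟩ = k₂ ⟨i₀, qF, 0⟩ := by
      have h := congrArg
        (coeff (sgl (N.Y i₀) + sgl (N.S i₀ (qF : ℕ)) + sgl (N.S i₀ (β₀ : ℕ)))) e3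
      rw [coeff_D3_m2 h1 hp k₁ i₀ β₀ hβ qF hq2, coeff_D3_m2 h1 hp k₂ i₀ β₀ hβ qF hq2,
        hc, ha, neg_inj] at h
      exact mul_right_cancel₀ (ne_of_gt hprodpos) h
    show (k₁ ⟨i₀, qF, 0⟩, k₁ ⟨i₀, qF, 1⟩ + k₁ ⟨i₀, qF, 2⟩)
      = (k₂ ⟨i₀, qF, 0⟩, k₂ ⟨i₀, qF, 1⟩ + k₂ ⟨i₀, qF, 2⟩)
    rw [haq, hK]

end A1Network
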